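/- arXiv:2604.08386 — 5 statements merged into one kernel-verified Lean document; each statement's English description precedes it below -/
import Mathlib

section
/- Let G=(V,E) and 𝒢=(𝒱,ℰ) be finite simple undirected graphs and let φ: V → 𝒱 be a surjective weak homomorphism such that for every y∈𝒱, every x∈φ⁻¹(y), and every y'∼y, the harmonic measure satisfies ℋ_y(x,y') = 1/deg(y). Then for every y∈𝒱, every x∈φ⁻¹(y) having at least one G-neighbor outside φ⁻¹(y), and every y'∼y, the multiplicity satisfies deg(y)·k_{y'}(x) = deg_G(x) − k_y(x), where k_y(x) is the number of G-neighbors of x inside φ⁻¹(y); in particular k_{y'}(x) is the same for all y'∼y, and φ is horizontally conformal. -/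
open Finset Classical

variable {V W : Type*}

/-- Degree of a vertex in a finite simple graph (classical count of neighbors). -/
noncomputable def gdeg [Fintype V] (G : SimpleGraph V) (v : V) : ℕ :=
  (Finset.univ.filter (fun z => G.Adj v z)).card

/-- A function `f` is harmonic at the vertex `v`: the degree is positive and
`f v` equals the average of `f` over the neighbors of `v`. -/
def HarmonicAt [Fintype V] (G : SimpleGraph V) (f : V → ℝ) (v : V) : Prop :=
  0 < gdeg G v ∧
    f v = (∑ z ∈ Finset.univ.filter (fun z => G.Adj v z), f z) / (gdeg G v : ℝ)

/-- `φ` is a harmonic morphism: the pullback of any function harmonic at a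
macro-node `y` is harmonic at every node of the macro-set `φ⁻¹(y)`. -/
def HarmonicMorphism [Fintype V] [Fintype W] (G : SimpleGraph V) (H : SimpleGraph W)
    (φ : V → W) : Prop :=
  ∀ y : W, ∀ x : V, φ x = y → ∀ f : W → ℝ, HarmonicAt H f y → HarmonicAt G (f ∘ φ) x

/-- `φ` is a weak homomorphism: adjacent nodes map to adjacent or identical macro-nodes. -/
def WeakHom (G : SimpleGraph V) (H : SimpleGraph W) (φ : V → W) : Prop :=
  ∀ x z : V, G.Adj x z → H.Adj (φ x) (φ z) ∨ φ x = φ z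

/-- Multiplicity `k_{y'}(x)`: the number of neighbors of `x` lying in the macro-set `φ⁻¹(y')`. -/
noncomputable def mult [Fintype V] (G : SimpleGraph V) (φ : V → W) (y' : W) (x : V) : ℕ :=
  (Finset.univ.filter (fun z => φ z = y' ∧ G.Adj x z)).card

/-- Extended multiplicity `k̃_{y'}(x)`: the number of `z ∈ φ⁻¹(y')` with `z ∼ x` or `z = x`. -/
noncomputable def emult [Fintype V] (G : SimpleGraph V) (φ : V → W) (y' : W) (x : V) : ℕ :=
  (Finset.univ.filter (fun z => φ z = y' ∧ (G.Adj x z ∨ z = x))).card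

/-- `φ` is horizontally conformal: a weak homomorphism whose multiplicities
`k_{y'}(x)` take the same value over all macro-nodes `y'` adjacent to `y = φ x`. -/
def HorizontallyConformal [Fintype V] (G : SimpleGraph V) (H : SimpleGraph W)
    (φ : V → W) : Prop :=
  WeakHom G H φ ∧
    ∀ y : W, ∀ x : V, φ x = y → ∀ y₁ y₂ : W, H.Adj y y₁ → H.Adj y y₂ →
      mult G φ y₁ x = mult G φ y₂ x

/-- `φ` is combinatorial conformal: a weak homomorphism whose extended multiplicities
`k̃_{y'}(x)` take the same value over all `y'` with `y' ∼ y` or `y' = y`, where `y = φ x`. -/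
def CombinatorialConformal [Fintype V] (G : SimpleGraph V) (H : SimpleGraph W)
    (φ : V → W) : Prop :=
  WeakHom G H φ ∧
    ∀ y : W, ∀ x : V, φ x = y → ∀ y₁ y₂ : W,
      (H.Adj y y₁ ∨ y₁ = y) → (H.Adj y y₂ ∨ y₂ = y) →
      emult G φ y₁ x = emult G φ y₂ x

/-- The boundary `∂G_y`: vertices outside the macro-set `φ⁻¹(y)` adjacent to it. -/
def boundarySet (G : SimpleGraph V) (φ : V → W) (y : W) : Set V :=
  {z | φ z ≠ y ∧ ∃ x : V, φ x = y ∧ G.Adj x z}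

/-- `h` solves the first-exit (Dirichlet) problem characterizing the harmonic
measure `ℋ_y(·, y')`: it is harmonic (average of neighbors) at every vertex of
the macro-set `φ⁻¹(y)`, equals `1` on `∂G_{yy'}` and `0` on `∂G_y ∖ ∂G_{yy'}`. -/
def IsExitSolution [Fintype V] (G : SimpleGraph V) (φ : V → W) (y y' : W)
    (h : V → ℝ) : Prop :=
  (∀ x : V, φ x = y →
      (gdeg G x : ℝ) * h x = ∑ z ∈ Finset.univ.filter (fun z => G.Adj x z), h z) ∧
  (∀ z : V, z ∈ boundarySet G φ y → φ z = y' → h z = 1) ∧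
  (∀ z : V, z ∈ boundarySet G φ y → φ z ≠ y' → h z = 0)

/-- The quotient graph of a coarse-graining `φ`: two distinct macro-nodes are
adjacent iff some edge of `G` joins their pre-images. -/
def quotientGraph (G : SimpleGraph V) (φ : V → W) : SimpleGraph W where
  Adj y y' := y ≠ y' ∧ ∃ x z : V, φ x = y ∧ φ z = y' ∧ G.Adj x z
  symm := ⟨fun _ _ ⟨h1, x, z, hx, hz, hadj⟩ => ⟨h1.symm, z, x, hz, hx, hadj.symm⟩⟩
  loopless := ⟨fun _ ⟨h1, _⟩ => h1 rfl⟩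

lemma energy_update [Fintype V] (G : SimpleGraph V) (h : V → ℝ) (x : V) (t : ℝ) :
    (∑ u, ∑ z ∈ Finset.univ.filter (fun z => G.Adj u z),
        (Function.update h x t u - Function.update h x t z)^2)
      = 2 * (∑ z ∈ Finset.univ.filter (fun z => G.Adj x z), (t - h z)^2)
        + ∑ u ∈ Finset.univ.erase x,
            ∑ z ∈ (Finset.univ.filter (fun z => G.Adj u z)).erase x, (h u - h z)^2 := by
  classical
  set N : V → Finset V := fun u => Finset.univ.filter (fun z => G.Adj u z) with hN
  have hxN : ∀ u, ∀ z ∈ N u, G.Adj u z := by intro u z hz; simpa [hN] using hz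
  have step1 : (∑ u, ∑ z ∈ N u, (Function.update h x t u - Function.update h x t z)^2)
      = (∑ z ∈ N x, (Function.update h x t x - Function.update h x t z)^2)
        + ∑ u ∈ Finset.univ.erase x, ∑ z ∈ N u, (Function.update h x t u - Function.update h x t z)^2 := by
    rw [← Finset.add_sum_erase _ _ (Finset.mem_univ x)]
  rw [step1]
  have hfx : (∑ z ∈ N x, (Function.update h x t x - Function.update h x t z)^2)
      = ∑ z ∈ N x, (t - h z)^2 := by
    apply Finset.sum_congr rfl
    intro z hz
    have hzx : z ≠ x := (hxN x z hz).ne'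
    rw [Function.update_self, Function.update_of_ne hzx]
  rw [hfx]
  have hrest : (∑ u ∈ Finset.univ.erase x, ∑ z ∈ N u, (Function.update h x t u - Function.update h x t z)^2)
      = (∑ z ∈ N x, (t - h z)^2)
        + ∑ u ∈ Finset.univ.erase x, ∑ z ∈ (N u).erase x, (h u - h z)^2 := by
    have key : ∀ u ∈ Finset.univ.erase x,
        (∑ z ∈ N u, (Function.update h x t u - Function.update h x t z)^2)
          = (if u ∈ N x then (t - h u)^2 else 0)
            + ∑ z ∈ (N u).erase x, (h u - h z)^2 := by
      intro u hu
      have hux : u ≠ x := Finset.ne_of_mem_erase hu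
      have hupd : Function.update h x t u = h u := Function.update_of_ne hux _ _
      have herase : (∑ z ∈ (N u).erase x, (Function.update h x t u - Function.update h x t z)^2)
          = ∑ z ∈ (N u).erase x, (h u - h z)^2 := by
        apply Finset.sum_congr rfl
        intro z hz
        rw [hupd, Function.update_of_ne (Finset.ne_of_mem_erase hz)]
      by_cases hadj : u ∈ N x
      · have hxNu : x ∈ N u := by
          simp only [hN, Finset.mem_filter, Finset.mem_univ, true_and] at hadj ⊢
          exact hadj.symm
        rw [← Finset.add_sum_erase _ _ hxNu, herase, if_pos hadj, hupd, Function.update_self]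
        congr 1
        ring
      · have hxNu : x ∉ N u := by
          simp only [hN, Finset.mem_filter, Finset.mem_univ, true_and] at hadj ⊢
          exact fun hc => hadj hc.symm
        rw [Finset.erase_eq_of_notMem hxNu] at herase
        rw [if_neg hadj, zero_add, Finset.erase_eq_of_notMem hxNu, herase]
    rw [Finset.sum_congr rfl key, Finset.sum_add_distrib]
    congr 1
    rw [Finset.sum_ite_mem]
    have hsub : N x ⊆ Finset.univ.erase x := by
      intro z hz
      exact Finset.mem_erase.2 ⟨(hxN x z hz).ne', Finset.mem_univ z⟩
    rw [Finset.inter_eq_right.2 hsub]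
  rw [hrest]; ring

lemma dirichlet_exists [Fintype V] (G : SimpleGraph V) (S : Set V) (g : V → ℝ)
    (hg : ∀ z, g z ∈ Set.Icc (0:ℝ) 1) :
    ∃ h : V → ℝ, (∀ z, z ∉ S → h z = g z) ∧
      ∀ x ∈ S, (gdeg G x : ℝ) * h x
        = ∑ z ∈ Finset.univ.filter (fun z => G.Adj x z), h z := by
  classical
  set K : Set (V → ℝ) := Set.univ.pi (fun z => if z ∈ S then Set.Icc (0:ℝ) 1 else {g z}) with hK
  have hKc : IsCompact K := isCompact_univ_pi (fun z => by
    by_cases hz : z ∈ S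
    · rw [if_pos hz]; exact isCompact_Icc
    · rw [if_neg hz]; exact isCompact_singleton)
  have hKne : K.Nonempty := by
    refine ⟨fun z => if z ∈ S then 0 else g z, ?_⟩
    intro z _
    by_cases hz : z ∈ S <;> simp [hz]
  set E : (V → ℝ) → ℝ :=
    fun h => ∑ u, ∑ z ∈ Finset.univ.filter (fun z => G.Adj u z), (h u - h z)^2 with hE'
  have hE : Continuous E := by
    apply continuous_finset_sum; intro u _
    apply continuous_finset_sum; intro z _
    exact ((continuous_apply u).sub (continuous_apply z)).pow 2
  obtain ⟨h, hhK, hmin⟩ := hKc.exists_isMinOn hKne hE.continuousOn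
  have hbd : ∀ z, h z ∈ Set.Icc (0:ℝ) 1 := by
    intro z
    have hz := hhK z (Set.mem_univ z)
    dsimp only at hz
    split at hz
    · exact hz
    · rw [Set.mem_singleton_iff] at hz; rw [hz]; exact hg z
  have hfix : ∀ z, z ∉ S → h z = g z := by
    intro z hz
    have hz' := hhK z (Set.mem_univ z)
    dsimp only at hz'
    rw [if_neg hz, Set.mem_singleton_iff] at hz'
    exact hz'
  refine ⟨h, hfix, ?_⟩
  intro x hxS
  set N : Finset V := Finset.univ.filter (fun z => G.Adj x z) with hNdef
  by_cases hcard : N.card = 0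
  · have hNe : N = ∅ := Finset.card_eq_zero.mp hcard
    simp [gdeg, ← hNdef, hNe, hcard]
  -- minimality gives f (h x) ≤ f t for t ∈ [0,1]
  have hmin' : ∀ t ∈ Set.Icc (0:ℝ) 1,
      (∑ z ∈ N, (h x - h z)^2) ≤ ∑ z ∈ N, (t - h z)^2 := by
    intro t ht
    have hmem : Function.update h x t ∈ K := by
      intro z _
      show Function.update h x t z ∈ if z ∈ S then Set.Icc (0:ℝ) 1 else {g z}
      by_cases hzx : z = x
      · subst hzx
        rw [Function.update_self, if_pos hxS]
        exact ht
      · rw [Function.update_of_ne hzx]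
        exact hhK z (Set.mem_univ z)
    have hle : E h ≤ E (Function.update h x t) := hmin hmem
    have e1 : E (Function.update h x t)
        = 2 * (∑ z ∈ N, (t - h z)^2)
          + ∑ u ∈ Finset.univ.erase x,
              ∑ z ∈ (Finset.univ.filter (fun z => G.Adj u z)).erase x, (h u - h z)^2 :=
      energy_update G h x t
    have e2 : E h
        = 2 * (∑ z ∈ N, (h x - h z)^2)
          + ∑ u ∈ Finset.univ.erase x,
              ∑ z ∈ (Finset.univ.filter (fun z => G.Adj u z)).erase x, (h u - h z)^2 := by
      have := energy_update G h x (h x)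
      rwa [Function.update_eq_self] at this
    rw [e1, e2] at hle
    linarith
  -- expand the quadratic
  set m : ℝ := ∑ z ∈ N, h z with hm
  set q : ℝ := ∑ z ∈ N, (h z)^2 with hq
  have expand : ∀ t : ℝ, (∑ z ∈ N, (t - h z)^2) = N.card * t^2 - 2*t*m + q := by
    intro t
    have : ∀ z ∈ N, (t - h z)^2 = t^2 - 2*t*h z + (h z)^2 := fun z _ => by ring
    rw [Finset.sum_congr rfl this, Finset.sum_add_distrib, Finset.sum_sub_distrib,
      Finset.sum_const, ← Finset.mul_sum, nsmul_eq_mul]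
  have hd : (0:ℝ) < N.card := by positivity
  have hm0 : 0 ≤ m := Finset.sum_nonneg (fun z _ => (hbd z).1)
  have hm1 : m ≤ N.card := by
    calc m ≤ ∑ z ∈ N, (1:ℝ) := Finset.sum_le_sum (fun z _ => (hbd z).2)
    _ = N.card := by simp
  have htstar : m / N.card ∈ Set.Icc (0:ℝ) 1 := ⟨by positivity, by rw [div_le_one hd]; exact hm1⟩
  have key := hmin' _ htstar
  rw [expand, expand] at key
  have hd' : (N.card:ℝ) ≠ 0 := ne_of_gt hd
  have h2 : ((N.card:ℝ) * h x - m)^2 ≤ 0 := by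
    have e3 : (N.card:ℝ) * (m/N.card)^2 - 2*(m/N.card)*m + q = -(m^2)/N.card + q := by
      field_simp; ring
    rw [e3] at key
    have k3 : (N.card:ℝ)*((N.card:ℝ) * (h x)^2 - 2*(h x)*m) ≤ (N.card:ℝ) * (-(m^2)/N.card) :=
      mul_le_mul_of_nonneg_left (by linarith) hd.le
    have k4 : (N.card:ℝ) * (-(m^2)/N.card) = -(m^2) := by
      rw [mul_comm, div_mul_cancel₀ _ hd']
    nlinarith [k3, k4]
  have h4 : ((N.card:ℝ) * h x - m)^2 = 0 := le_antisymm h2 (sq_nonneg _)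
  have h5 : (N.card:ℝ) * h x - m = 0 := by
    exact sq_eq_zero_iff.mp h4
  have : (gdeg G x : ℝ) = N.card := by rw [gdeg, hNdef]
  rw [this]
  linarith

/-- If `φ` is a surjective weak homomorphism satisfying the harmonic measure condition
`ℋ_y(x, y') = 1 / deg_𝒢 y`, then for every `y`, every `x ∈ φ⁻¹(y)` with at least one
neighbor outside `φ⁻¹(y)`, and every `y' ∼ y`, `deg_𝒢(y) · k_{y'}(x) = deg_G(x) − k_y(x)`;
in particular the multiplicities are constant and `φ` is horizontally conformal. -/
theorem harmonic_measure_horizontally_conformal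
    [Fintype V] [Fintype W] (G : SimpleGraph V) (H : SimpleGraph W)
    (φ : V → W) (hsurj : Function.Surjective φ)
    (hdeg : ∀ y : W, (boundarySet G φ y).Nonempty → 1 ≤ gdeg H y)
    (hweak : WeakHom G H φ)
    (hHM : ∀ y : W, ∀ x : V, φ x = y → ∀ y' : W, H.Adj y y' →
      ∀ h : V → ℝ, IsExitSolution G φ y y' h → h x = 1 / (gdeg H y : ℝ)) :
    (∀ y : W, ∀ x : V, φ x = y → (∃ z : V, G.Adj x z ∧ φ z ≠ y) →
      ∀ y' : W, H.Adj y y' →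
        gdeg H y * mult G φ y' x = gdeg G x - mult G φ y x) ∧
      HorizontallyConformal G H φ := by
  classical
  have main : ∀ y : W, ∀ x : V, φ x = y → (∃ z : V, G.Adj x z ∧ φ z ≠ y) →
      ∀ y' : W, H.Adj y y' →
        gdeg G x = mult G φ y x + gdeg H y * mult G φ y' x := by
    intro y x hx hz y' hadj
    obtain ⟨z0, hz0adj, hz0ne⟩ := hz
    have hbne : (boundarySet G φ y).Nonempty := ⟨z0, hz0ne, x, hx, hz0adj⟩
    have hd1 : 1 ≤ gdeg H y := hdeg y hbne
    have hdpos : (0:ℝ) < (gdeg H y : ℝ) := by exact_mod_cast hd1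
    have hdne : (gdeg H y : ℝ) ≠ 0 := ne_of_gt hdpos
    have hyy' : y ≠ y' := H.ne_of_adj hadj
    -- construct the exit solution
    obtain ⟨h, hfix, hharm⟩ := dirichlet_exists G {v | φ v = y}
      (fun v => if φ v = y' then 1 else 0)
      (fun v => by split <;> norm_num)
    have hexit : IsExitSolution G φ y y' h := by
      refine ⟨fun v hv => hharm v hv, ?_, ?_⟩
      · intro z hzb hzy'
        have := hfix z (by exact hzb.1)
        rw [this, if_pos hzy']
      · intro z hzb hzy'
        have := hfix z (by exact hzb.1)
        rw [this, if_neg hzy']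
    have hval : ∀ v : V, φ v = y → h v = 1 / (gdeg H y : ℝ) :=
      fun v hv => hHM y v hv y' hadj h hexit
    -- harmonic identity at x
    have heq := hharm x hx
    rw [hval x hx] at heq
    set N : Finset V := Finset.univ.filter (fun z => G.Adj x z) with hN
    have hptw : ∀ z ∈ N, h z
        = if φ z = y then 1 / (gdeg H y : ℝ) else if φ z = y' then 1 else 0 := by
      intro z hzN
      have hzadj : G.Adj x z := by simpa [hN] using hzN
      by_cases hzy : φ z = y
      · rw [if_pos hzy]; exact hval z hzy
      · rw [if_neg hzy]
        have hzb : z ∈ boundarySet G φ y := ⟨hzy, x, hx, hzadj⟩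
        by_cases hzy' : φ z = y'
        · rw [if_pos hzy']; exact hexit.2.1 z hzb hzy'
        · rw [if_neg hzy']; exact hexit.2.2 z hzb hzy'
    rw [Finset.sum_congr rfl hptw, Finset.sum_ite, Finset.sum_const, Finset.sum_ite,
      Finset.sum_const, Finset.sum_const] at heq
    have hc1 : (N.filter (fun z => φ z = y)).card = mult G φ y x := by
      simp [mult, hN, Finset.filter_filter, and_comm]
    have hc2 : ((N.filter (fun z => ¬ φ z = y)).filter (fun z => φ z = y')).card
        = mult G φ y' x := by
      rw [Finset.filter_filter]
      have : ∀ z : V, ((¬ φ z = y) ∧ φ z = y') ↔ φ z = y' := by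
        intro z
        constructor
        · exact fun hp => hp.2
        · intro hp; exact ⟨fun hc => hyy' (hc ▸ hp.symm ▸ rfl), hp⟩
      simp only [this]
      simp [mult, hN, Finset.filter_filter, and_comm]
    have hc3 : ((N.filter (fun z => ¬ φ z = y)).filter (fun z => ¬ φ z = y')).card • (0:ℝ) = 0 := by
      simp
    rw [hc3, hc1] at heq
    rw [hc2] at heq
    simp only [nsmul_eq_mul, smul_eq_mul, mul_one, add_zero] at heq
    -- heq : (gdeg G x) * (1/d) = ky * (1/d) + ky'
    have hNcard : (gdeg G x : ℝ) = (N.card : ℝ) := by rw [gdeg, hN]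
    have hreal : (gdeg G x : ℝ) = (mult G φ y x : ℝ) + (gdeg H y : ℝ) * (mult G φ y' x : ℝ) := by
      field_simp at heq
      linarith
    exact_mod_cast hreal
  constructor
  · intro y x hx hz y' hadj
    have := main y x hx hz y' hadj
    omega
  · refine ⟨hweak, ?_⟩
    intro y x hx y₁ y₂ h1 h2
    by_cases hout : ∃ z : V, G.Adj x z ∧ φ z ≠ y
    · obtain ⟨z0, hz0adj, hz0ne⟩ := hout
      have e1 := main y x hx ⟨z0, hz0adj, hz0ne⟩ y₁ h1
      have e2 := main y x hx ⟨z0, hz0adj, hz0ne⟩ y₂ h2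
      have hd1 : 1 ≤ gdeg H y := hdeg y ⟨z0, hz0ne, x, hx, hz0adj⟩
      have : gdeg H y * mult G φ y₁ x = gdeg H y * mult G φ y₂ x := by omega
      exact Nat.eq_of_mul_eq_mul_left (by omega) this
    · push_neg at hout
      have hz1 : mult G φ y₁ x = 0 := by
        rw [mult, Finset.card_eq_zero, Finset.filter_eq_empty_iff]
        intro z _ hc
        exact (H.ne_of_adj h1) ((hout z hc.2).symm.trans hc.1)
      have hz2 : mult G φ y₂ x = 0 := by
        rw [mult, Finset.card_eq_zero, Finset.filter_eq_empty_iff]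
        intro z _ hc
        exact (H.ne_of_adj h2) ((hout z hc.2).symm.trans hc.1)
      rw [hz1, hz2]
end

section
/- Let G=(V,E) and 𝒢=(𝒱,ℰ) be finite simple undirected graphs and let φ: V → 𝒱 be a surjective map. Then φ is combinatorial conformal if and only if for every y∈𝒱, every x∈φ⁻¹(y), and every y'∈𝒱 with y'∼y or y'=y, the one-step transition probability of the lazy random walk on G satisfies ℙ(ℒ₁ ∈ φ⁻¹(y') | ℒ₀ = x) = 1/(deg(y)+1); equivalently, the extended multiplicity satisfies k̃_{y'}(x)/(deg_G(x)+1) = 1/(deg_𝒢(y)+1). -/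
open Finset Classical

variable {V W : Type*}

section AuxLemmas

variable [Fintype V] [Fintype W]

lemma emult_fiber (G : SimpleGraph V) (φ : V → W) (y' : W) (x : V) :
    emult G φ y' x
      = ((Finset.univ.filter (fun z => G.Adj x z ∨ z = x)).filter
          (fun z => φ z = y')).card := by
  unfold emult
  rw [Finset.filter_filter]
  congr 1
  ext z
  simp [and_comm]

lemma cardT (G : SimpleGraph V) (x : V) :
    (Finset.univ.filter (fun z => G.Adj x z ∨ z = x)).card = gdeg G x + 1 := by
  have h : (Finset.univ.filter (fun z => G.Adj x z ∨ z = x))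
      = insert x (Finset.univ.filter (fun z => G.Adj x z)) := by
    ext z; simp [or_comm]
  rw [h, Finset.card_insert_of_notMem (by simp [G.irrefl])]
  rfl

lemma cardS (H : SimpleGraph W) (y : W) :
    (Finset.univ.filter (fun y' => H.Adj y y' ∨ y' = y)).card = gdeg H y + 1 := by
  have h : (Finset.univ.filter (fun y' => H.Adj y y' ∨ y' = y))
      = insert y (Finset.univ.filter (fun y' => H.Adj y y')) := by
    ext z; simp [or_comm]
  rw [h, Finset.card_insert_of_notMem (by simp [H.irrefl])]
  rfl

lemma sum_emult (G : SimpleGraph V) (H : SimpleGraph W) (φ : V → W) (y : W) (x : V) :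
    ∑ y' ∈ Finset.univ.filter (fun y' => H.Adj y y' ∨ y' = y), emult G φ y' x
      = ((Finset.univ.filter (fun z => G.Adj x z ∨ z = x)).filter
          (fun z => H.Adj y (φ z) ∨ φ z = y)).card := by
  rw [Finset.card_eq_sum_card_fiberwise
    (f := φ) (t := Finset.univ.filter (fun y' => H.Adj y y' ∨ y' = y))
    (fun z hz => by simp only [Finset.mem_coe, Finset.mem_filter] at hz ⊢; exact ⟨Finset.mem_univ _, hz.2⟩)]
  apply Finset.sum_congr rfl
  intro y' hy'
  simp only [Finset.mem_filter, Finset.mem_univ, true_and] at hy'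
  rw [emult_fiber]
  congr 1
  ext z
  simp only [Finset.mem_filter, Finset.mem_univ, true_and]
  constructor
  · rintro ⟨hT, hφ⟩; subst hφ; exact ⟨⟨hT, hy'⟩, rfl⟩
  · rintro ⟨⟨hT, _⟩, hφ⟩; exact ⟨hT, hφ⟩

end AuxLemmas

/-- **Lazy random walk preservation.** A surjective map `φ` is combinatorial conformal iff
for every `y`, every `x ∈ φ⁻¹(y)` and every `y'` with `y' ∼ y` or `y' = y`, the one-step
transition probability of the lazy random walk on `G` into `φ⁻¹(y')`, namely
`k̃_{y'}(x) / (deg_G(x) + 1)`, equals `1 / (deg_𝒢(y) + 1)`. -/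
theorem combinatorial_conformal_iff_lazy_walk
    [Fintype V] [Fintype W] (G : SimpleGraph V) (H : SimpleGraph W)
    (φ : V → W) (hsurj : Function.Surjective φ) :
    CombinatorialConformal G H φ ↔
      (∀ y : W, ∀ x : V, φ x = y → ∀ y' : W, (H.Adj y y' ∨ y' = y) →
        (emult G φ y' x : ℝ) / ((gdeg G x : ℝ) + 1) = 1 / ((gdeg H y : ℝ) + 1)) := by

  constructor
  · rintro ⟨hwh, heq⟩ y x hx y' hy'
    have hfull : (Finset.univ.filter (fun z => G.Adj x z ∨ z = x)).filter
        (fun z => H.Adj y (φ z) ∨ φ z = y)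
        = Finset.univ.filter (fun z => G.Adj x z ∨ z = x) := by
      apply Finset.filter_eq_self.mpr
      intro z hz
      simp only [Finset.mem_filter, Finset.mem_univ, true_and] at hz
      rcases hz with h | h
      · rcases hwh x z h with h' | h'
        · left; rw [← hx]; exact h'
        · right; rw [← h', hx]
      · right; rw [h, hx]
    have hsum := sum_emult G H φ y x
    rw [hfull, cardT] at hsum
    have hconst : ∀ y'' ∈ Finset.univ.filter (fun y'' => H.Adj y y'' ∨ y'' = y),
        emult G φ y'' x = emult G φ y' x := by
      intro y'' h
      simp only [Finset.mem_filter, Finset.mem_univ, true_and] at h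
      exact heq y x hx y'' y' h hy'
    rw [Finset.sum_congr rfl hconst, Finset.sum_const, cardS, smul_eq_mul] at hsum
    have hk : emult G φ y' x ≠ 0 := by
      intro h0; rw [h0, Nat.mul_zero] at hsum; omega
    have hkR : (emult G φ y' x : ℝ) ≠ 0 := Nat.cast_ne_zero.mpr hk
    have hdR : (gdeg H y : ℝ) + 1 ≠ 0 := by positivity
    have hGE : (gdeg G x : ℝ) + 1 = ((gdeg H y : ℝ) + 1) * (emult G φ y' x : ℝ) := by
      exact_mod_cast congrArg (Nat.cast : ℕ → ℝ) hsum.symm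
    rw [hGE]
    field_simp
  · intro hp
    have key : ∀ y : W, ∀ x : V, φ x = y → ∀ y' : W, (H.Adj y y' ∨ y' = y) →
        emult G φ y' x * (gdeg H y + 1) = gdeg G x + 1 := by
      intro y x hx y' hy'
      have h := hp y x hx y' hy'
      have hg : (gdeg G x : ℝ) + 1 ≠ 0 := by positivity
      have hd : (gdeg H y : ℝ) + 1 ≠ 0 := by positivity
      have h2 : (emult G φ y' x : ℝ) * ((gdeg H y : ℝ) + 1)
          = 1 * ((gdeg G x : ℝ) + 1) := (div_eq_div_iff hg hd).mp h
      rw [one_mul] at h2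
      exact_mod_cast h2
    have hwh : WeakHom G H φ := by
      intro x z hadj
      by_contra hc
      push_neg at hc
      have hsum := sum_emult G H φ (φ x) x
      have hlt : ((Finset.univ.filter (fun z => G.Adj x z ∨ z = x)).filter
          (fun w => H.Adj (φ x) (φ w) ∨ φ w = φ x)).card < gdeg G x + 1 := by
        rw [← cardT G x]
        apply Finset.card_lt_card
        rw [Finset.ssubset_iff_of_subset (Finset.filter_subset _ _)]
        refine ⟨z, ?_, ?_⟩
        · simp only [Finset.mem_filter, Finset.mem_univ, true_and]
          exact Or.inl hadj
        · simp only [Finset.mem_filter, Finset.mem_univ, true_and, not_and, not_or]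
          intro _
          exact ⟨hc.1, fun h => hc.2 h.symm⟩
      have hs2 : (∑ y' ∈ Finset.univ.filter (fun y' => H.Adj (φ x) y' ∨ y' = φ x),
          emult G φ y' x) * (gdeg H (φ x) + 1)
          = (gdeg H (φ x) + 1) * (gdeg G x + 1) := by
        rw [Finset.sum_mul]
        rw [Finset.sum_congr rfl (fun y' hy' => by
          simp only [Finset.mem_filter, Finset.mem_univ, true_and] at hy'
          exact key (φ x) x rfl y' hy')]
        rw [Finset.sum_const, cardS, smul_eq_mul]
      have heq : ∑ y' ∈ Finset.univ.filter (fun y' => H.Adj (φ x) y' ∨ y' = φ x),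
          emult G φ y' x = gdeg G x + 1 := by
        have := hs2.trans (mul_comm _ _)
        exact Nat.eq_of_mul_eq_mul_right (by omega) this
      rw [hsum] at heq
      omega
    refine ⟨hwh, ?_⟩
    intro y x hx y₁ y₂ h1 h2
    have e1 := key y x hx y₁ h1
    have e2 := key y x hx y₂ h2
    exact Nat.eq_of_mul_eq_mul_right (by omega) (e1.trans e2.symm)
end

section
/- Let G=(V,E) and 𝒢=(𝒱,ℰ) be finite simple undirected graphs and let φ: V → 𝒱 be a surjective combinatorial conformal map. Then for every y∈𝒱, every x∈φ⁻¹(y), and every y'∈𝒱 with y'∼y or y'=y, the extended multiplicity satisfies k̃_{y'}(x)·(deg_𝒢(y)+1) = deg_G(x)+1; in particular, deg_𝒢(y)+1 divides deg_G(x)+1 for every x∈φ⁻¹(y). -/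
open Finset Classical

variable {V W : Type*}

/-- For a surjective combinatorial conformal map `φ` onto its quotient graph, the extended
multiplicity satisfies `k̃_{y'}(x) · (deg_𝒢(y) + 1) = deg_G(x) + 1` for all `y'` with
`y' ∼ y` or `y' = y`; in particular `deg_𝒢(y) + 1` divides `deg_G(x) + 1`. -/
theorem combinatorial_conformal_degree_divisibility
    [Fintype V] [Fintype W] (G : SimpleGraph V) (H : SimpleGraph W)
    (φ : V → W) (hsurj : Function.Surjective φ)
    (hquot : ∀ y y' : W, H.Adj y y' ↔
      y ≠ y' ∧ ∃ x z : V, φ x = y ∧ φ z = y' ∧ G.Adj x z)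
    (hcc : CombinatorialConformal G H φ) :
    ∀ y : W, ∀ x : V, φ x = y →
      (∀ y' : W, (H.Adj y y' ∨ y' = y) →
        emult G φ y' x * (gdeg H y + 1) = gdeg G x + 1) ∧
      (gdeg H y + 1) ∣ (gdeg G x + 1) := by
  intro y x hx
  set S : Finset W := Finset.univ.filter (fun y' => H.Adj y y' ∨ y' = y) with hS
  have hScard : S.card = gdeg H y + 1 := by
    have : S = insert y (Finset.univ.filter (fun y' => H.Adj y y')) := by
      ext y'
      simp [hS, or_comm, eq_comm]
    rw [this, Finset.card_insert_of_notMem (by simp [H.irrefl]), gdeg]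
  set s : Finset V := Finset.univ.filter (fun z => G.Adj x z ∨ z = x) with hs
  have hscard : s.card = gdeg G x + 1 := by
    have : s = insert x (Finset.univ.filter (fun z => G.Adj x z)) := by
      ext z
      simp [hs, or_comm, eq_comm]
    rw [this, Finset.card_insert_of_notMem (by simp [G.irrefl]), gdeg]
  have hmem : ∀ z ∈ s, φ z ∈ S := by
    intro z hz
    simp only [hs, Finset.mem_filter, Finset.mem_univ, true_and] at hz
    simp only [hS, Finset.mem_filter, Finset.mem_univ, true_and]
    rcases hz with hadj | rfl
    · rcases hcc.1 x z hadj with h | h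
      · left; rwa [hx] at h
      · right; rw [← h, hx]
    · right; exact hx
  have hsum : s.card = ∑ y' ∈ S, emult G φ y' x := by
    rw [Finset.card_eq_sum_card_fiberwise hmem]
    refine Finset.sum_congr rfl fun y' _ => ?_
    unfold emult
    congr 1
    ext z
    simp [hs, and_comm]
  have hconst : ∀ y' ∈ S, emult G φ y' x = emult G φ y x := by
    intro y' hy'
    simp only [hS, Finset.mem_filter, Finset.mem_univ, true_and] at hy'
    exact hcc.2 y x hx y' y hy' (Or.inr rfl)
  have hkey : emult G φ y x * (gdeg H y + 1) = gdeg G x + 1 := by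
    rw [← hscard, hsum, Finset.sum_congr rfl hconst, Finset.sum_const, ← hScard,
      smul_eq_mul, mul_comm]
  constructor
  · intro y' hy'
    have : y' ∈ S := by simp [hS, hy']
    rw [hconst y' this, hkey]
  · exact ⟨emult G φ y x, by rw [← hkey, mul_comm]⟩
end

section
/- Let G=(V,E) and 𝒢=(𝒱,ℰ) be finite simple undirected graphs and let φ: V → 𝒱 be a surjective combinatorial conformal map. Then φ is horizontally conformal; in particular, every surjective combinatorial conformal map is a harmonic morphism. -/
open Finset Classical

variable {V W : Type*}

/-- Every surjective combinatorial conformal map is horizontally conformal, and in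
particular a harmonic morphism. -/
theorem combinatorial_conformal_is_harmonic_morphism
    [Fintype V] [Fintype W] (G : SimpleGraph V) (H : SimpleGraph W)
    (φ : V → W) (hsurj : Function.Surjective φ)
    (hcc : CombinatorialConformal G H φ) :
    HorizontallyConformal G H φ ∧ HarmonicMorphism G H φ := by
  obtain ⟨hweak, hcc2⟩ := hcc
  have hmult_emult : ∀ (x : V) (y' : W), y' ≠ φ x → mult G φ y' x = emult G φ y' x := by
    intro x y' hne
    unfold mult emult
    congr 1
    apply Finset.filter_congr
    intro z _
    constructor
    · rintro ⟨h1, h2⟩; exact ⟨h1, Or.inl h2⟩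
    · rintro ⟨h1, h2 | h2⟩
      · exact ⟨h1, h2⟩
      · subst h2; exact absurd h1.symm hne
  have hHC : HorizontallyConformal G H φ := by
    refine ⟨hweak, ?_⟩
    intro y x hx y₁ y₂ h1 h2
    rw [hmult_emult x y₁ (by rw [hx]; exact (H.ne_of_adj h1).symm),
        hmult_emult x y₂ (by rw [hx]; exact (H.ne_of_adj h2).symm)]
    exact hcc2 y x hx y₁ y₂ (Or.inl h1) (Or.inl h2)
  refine ⟨hHC, ?_⟩
  intro y x hx f hf
  subst hx
  set y := φ x with hy
  obtain ⟨hdegH, hfy⟩ := hf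
  set S : Finset W := Finset.univ.filter (fun y' => H.Adj y y') with hS
  have hyS : y ∉ S := by simp [hS]
  have hdS : S.card = gdeg H y := rfl
  set k : ℕ := emult G φ y x with hk
  have hk1 : 1 ≤ k := by
    rw [hk]
    unfold emult
    apply Finset.card_pos.mpr
    exact ⟨x, by simp [hy]⟩
  have hmS : ∀ y' ∈ S, mult G φ y' x = k := by
    intro y' hy'
    have hadj : H.Adj y y' := by simpa [hS] using hy'
    rw [hmult_emult x y' (H.ne_of_adj hadj).symm]
    exact hcc2 y x rfl y' y (Or.inl hadj) (Or.inr rfl)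
  have hzero : ∀ y', ¬ H.Adj y y' → y' ≠ y → mult G φ y' x = 0 := by
    intro y' h1 h2
    unfold mult
    rw [Finset.card_eq_zero, Finset.filter_eq_empty_iff]
    rintro z _ ⟨hz, hadj⟩
    rcases hweak x z hadj with h | h
    · rw [hz] at h; exact h1 h
    · rw [hz] at h; exact h2 h.symm
  have hfib : ∀ y' : W, (Finset.univ.filter (fun z => G.Adj x z)).filter (fun z => φ z = y')
      = Finset.univ.filter (fun z => φ z = y' ∧ G.Adj x z) := by
    intro y'
    ext z
    simp [and_comm]
  have hDsum : gdeg G x = ∑ y' : W, mult G φ y' x := by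
    unfold gdeg
    rw [Finset.card_eq_sum_card_fiberwise (f := φ) (t := Finset.univ)
      (fun z _ => Finset.mem_univ _)]
    refine Finset.sum_congr rfl (fun y' _ => ?_)
    rw [hfib y']
    rfl
  have hA : ∑ z ∈ Finset.univ.filter (fun z => G.Adj x z), f (φ z)
      = ∑ y' : W, (mult G φ y' x : ℝ) * f y' := by
    rw [← Finset.sum_fiberwise (Finset.univ.filter (fun z => G.Adj x z)) φ (fun z => f (φ z))]
    refine Finset.sum_congr rfl (fun y' _ => ?_)
    rw [hfib y']
    rw [Finset.sum_congr rfl (fun z hz => by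
      rw [(Finset.mem_filter.mp hz).2.1] : ∀ z ∈ _, f (φ z) = f y')]
    rw [Finset.sum_const]
    simp [mult, mul_comm]
  have hsplit : ∀ (g : W → ℝ), (∀ y', ¬H.Adj y y' → y' ≠ y → g y' = 0) →
      ∑ y' : W, g y' = g y + ∑ y' ∈ S, g y' := by
    intro g hg
    rw [← Finset.sum_insert hyS]
    symm
    apply Finset.sum_subset (Finset.subset_univ _)
    intro y' _ hy'
    simp only [Finset.mem_insert, hS, Finset.mem_filter, Finset.mem_univ, true_and,
      not_or] at hy'
    exact hg y' hy'.2 hy'.1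
  set m : ℕ := mult G φ y x with hm
  set d : ℕ := gdeg H y with hdd
  have hd0 : (d : ℝ) ≠ 0 := Nat.cast_ne_zero.mpr hdegH.ne'
  have hT : ∑ y' ∈ S, f y' = (d : ℝ) * f y := by
    have : ∑ y' ∈ S, f y' = ∑ z ∈ Finset.univ.filter (fun z => H.Adj y z), f z := rfl
    rw [this, hfy]
    field_simp
    rfl
  have hDR : (gdeg G x : ℝ) = (m : ℝ) + (d : ℝ) * (k : ℝ) := by
    have h1 : (gdeg G x : ℝ) = ∑ y' : W, ((mult G φ y' x : ℕ) : ℝ) := by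
      rw [hDsum]; push_cast; ring
    rw [h1, hsplit (fun y' => ((mult G φ y' x : ℕ) : ℝ))
      (fun y' h1' h2' => by simp [hzero y' h1' h2'])]
    have h2 : ∑ y' ∈ S, ((mult G φ y' x : ℕ) : ℝ) = ∑ y' ∈ S, (k : ℝ) :=
      Finset.sum_congr rfl (fun y' hy' => by rw [hmS y' hy'])
    rw [h2, Finset.sum_const, hdS]
    push_cast
    ring
  have hAR : ∑ z ∈ Finset.univ.filter (fun z => G.Adj x z), f (φ z)
      = (m : ℝ) * f y + (k : ℝ) * ((d : ℝ) * f y) := by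
    rw [hA, hsplit (fun y' => (mult G φ y' x : ℝ) * f y')
      (fun y' h1' h2' => by simp [hzero y' h1' h2'])]
    have h2 : ∑ y' ∈ S, (mult G φ y' x : ℝ) * f y' = (k : ℝ) * ∑ y' ∈ S, f y' := by
      rw [Finset.mul_sum]
      exact Finset.sum_congr rfl (fun y' hy' => by rw [hmS y' hy'])
    rw [h2, hT]
  have hDpos : 0 < gdeg G x := by
    rcases Nat.eq_zero_or_pos (gdeg G x) with h0 | h
    · exfalso
      rw [h0] at hDR
      have h1 : (1 : ℝ) ≤ (d : ℝ) * (k : ℝ) := by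
        have hd' : (1:ℝ) ≤ (d:ℝ) := by exact_mod_cast hdegH
        have hk' : (1:ℝ) ≤ (k:ℝ) := by exact_mod_cast hk1
        nlinarith
      have hm0 : (0:ℝ) ≤ (m:ℝ) := Nat.cast_nonneg m
      simp only [Nat.cast_zero] at hDR
      linarith
    · exact h
  refine ⟨hDpos, ?_⟩
  have hD0 : (gdeg G x : ℝ) ≠ 0 := Nat.cast_ne_zero.mpr hDpos.ne'
  have hcomp : ∑ z ∈ Finset.univ.filter (fun z => G.Adj x z), (f ∘ φ) z
      = ∑ z ∈ Finset.univ.filter (fun z => G.Adj x z), f (φ z) := rfl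
  rw [Function.comp_apply, hcomp, hAR, eq_div_iff hD0, hDR]
  ring
end

section
/- Let G=(V,E) and 𝒢=(𝒱,ℰ) be finite simple undirected graphs and let φ: V → 𝒱 be a surjective horizontally conformal map. Let y∈𝒱 with deg_𝒢(y) ≥ 1, let y'∼y, and suppose z∈φ⁻¹(y) has at least one G-neighbor outside φ⁻¹(y). Then the conditional probability that the simple random walk on G, standing at z, exits φ⁻¹(y) into φ⁻¹(y') in one step, given that it exits φ⁻¹(y) in one step, equals 1/deg_𝒢(y); equivalently, k_{y'}(z)/(deg_G(z) − k_y(z)) = 1/deg_𝒢(y), where k_y(z) is the number of G-neighbors of z inside φ⁻¹(y). -/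
open Finset Classical

variable {V W : Type*}

/-- For a surjective horizontally conformal map `φ` onto its quotient graph, the
conditional probability that the simple random walk at `z ∈ φ⁻¹(y)` exits `φ⁻¹(y)`
into `φ⁻¹(y')` in one step, given that it exits in one step, equals `1 / deg_𝒢(y)`:
`k_{y'}(z) / (deg_G(z) − k_y(z)) = 1 / deg_𝒢(y)`. -/
theorem horizontally_conformal_exit_probability
    [Fintype V] [Fintype W] (G : SimpleGraph V) (H : SimpleGraph W)
    (φ : V → W) (hsurj : Function.Surjective φ)
    (hquot : ∀ y y' : W, H.Adj y y' ↔
      y ≠ y' ∧ ∃ x z : V, φ x = y ∧ φ z = y' ∧ G.Adj x z)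
    (hhc : HorizontallyConformal G H φ)
    (y : W) (hdegy : 1 ≤ gdeg H y) (y' : W) (hadj : H.Adj y y')
    (z : V) (hz : φ z = y) (hout : ∃ w : V, G.Adj z w ∧ φ w ≠ y) :
    (mult G φ y' z : ℝ) / ((gdeg G z : ℝ) - (mult G φ y z : ℝ)) =
      1 / (gdeg H y : ℝ) := by
  classical
  set k := mult G φ y' z with hk
  -- degree splits as sum of multiplicities over macro-nodes
  have hsplit : gdeg G z = ∑ y'' : W, mult G φ y'' z := by
    unfold gdeg mult
    rw [Finset.card_eq_sum_card_fiberwise (f := φ) (t := Finset.univ)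
      (fun x _ => Finset.mem_univ _)]
    refine Finset.sum_congr rfl (fun y'' _ => ?_)
    rw [Finset.filter_filter]
    congr 1
    ext w
    simp [and_comm]
  -- each y'' ≠ y with nonzero mult is adjacent to y
  have hzero : ∀ y'' : W, y'' ≠ y → ¬ H.Adj y y'' → mult G φ y'' z = 0 := by
    intro y'' hne hnadj
    unfold mult
    rw [Finset.card_eq_zero, Finset.filter_eq_empty_iff]
    rintro w - ⟨hw, haw⟩
    rcases hhc.1 z w haw with h1 | h1
    · exact hnadj (hz ▸ hw ▸ h1)
    · exact hne (by rw [← hw, ← h1, hz])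
  have hconf : ∀ y'' : W, H.Adj y y'' → mult G φ y'' z = k := by
    intro y'' h''
    exact hhc.2 y z hz y'' y' h'' hadj
  have hsum : ∑ y'' ∈ Finset.univ.erase y, mult G φ y'' z = gdeg H y * k := by
    rw [← Finset.sum_subset (s₁ := Finset.univ.filter (fun y'' => H.Adj y y''))
      (fun x hx => by
        simp only [Finset.mem_filter, Finset.mem_erase, Finset.mem_univ] at *
        exact ⟨fun h => H.irrefl (h ▸ hx.2), trivial⟩)
      (fun x hx hnx => hzero x (Finset.mem_erase.mp hx).1
        (by simpa using hnx))]
    rw [Finset.sum_congr rfl (fun x hx => hconf x (by simpa using hx))]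
    simp [gdeg, mul_comm]
  have hdeg : (gdeg G z : ℕ) = mult G φ y z + gdeg H y * k := by
    rw [hsplit, ← Finset.add_sum_erase _ _ (Finset.mem_univ y), hsum]
  -- k is positive
  have hkpos : 0 < k := by
    obtain ⟨w, haw, hwy⟩ := hout
    have hadjw : H.Adj y (φ w) := by
      rcases hhc.1 z w haw with h1 | h1
      · exact hz ▸ h1
      · exact absurd (h1 ▸ hz) hwy
    have : 0 < mult G φ (φ w) z := by
      apply Finset.card_pos.mpr
      exact ⟨w, by simp [haw]⟩
    rwa [hconf _ hadjw] at this
  have hDpos : 0 < gdeg H y := hdegy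
  have hreal : (gdeg G z : ℝ) - (mult G φ y z : ℝ) = (gdeg H y : ℝ) * (k : ℝ) := by
    have := congrArg (fun n : ℕ => (n : ℝ)) hdeg
    push_cast at this
    linarith
  rw [hreal]
  rw [div_eq_div_iff (by positivity) (by positivity)]
  ring
end
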